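/- Let p be a prime, 0 ≤ a ≤ p-1 an integer, and t ∈ ℤ_p. Then the rising factorial satisfies (t)_a = (-1)^a · (Γ_p(t+a)/Γ_p(t)) · (t + [-t]_0)^{ν(a, [-t]_0)}, where ν(a,x) = 0 if a ≤ x and ν(a,x) = 1 if x < a ≤ p-1. -/

import Mathlib

/-- The rising factorial (Pochhammer symbol) `(a)_k = a(a+1)⋯(a+k-1)`. -/
def risingFact {R : Type*} [CommRing R] (a : R) (k : ℕ) : R :=
  ∏ i ∈ Finset.range k, (a + (i : R))

section Aux

variable {p : ℕ} [Fact p.Prime]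

lemma aux_nat_dvd_of_dvd_cast (m : ℕ) (h : (p : ℤ_[p]) ∣ (m : ℤ_[p])) : p ∣ m := by
  have hh : (p : ℤ_[p]) ∣ ((m : ℤ) : ℤ_[p]) := by exact_mod_cast h
  rw [← PadicInt.norm_lt_one_iff_dvd, PadicInt.norm_int_lt_one_iff_dvd] at hh
  exact_mod_cast hh

lemma aux_appr1_congr (x y : ℤ_[p]) (h : (p : ℤ_[p]) ∣ (x - y)) : x.appr 1 = y.appr 1 := by
  have hx := PadicInt.appr_spec 1 x
  have hy := PadicInt.appr_spec 1 y
  rw [Ideal.mem_span_singleton, pow_one] at hx hy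
  have hd : (p : ℤ_[p]) ∣ ((x.appr 1 : ℤ) - (y.appr 1 : ℤ) : ℤ) := by
    push_cast
    have : ((x.appr 1 : ℤ_[p]) - (y.appr 1 : ℤ_[p]))
        = (x - y) - (x - x.appr 1) + (y - y.appr 1) := by ring
    rw [this]
    exact dvd_add (dvd_sub h hx) hy
  have hd' : (p : ℤ) ∣ ((x.appr 1 : ℤ) - (y.appr 1 : ℤ)) := by
    have h2 := (PadicInt.norm_lt_one_iff_dvd _).mpr hd
    rwa [PadicInt.norm_int_lt_one_iff_dvd] at h2
  have hxl := x.appr_lt 1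
  have hyl := y.appr_lt 1
  rw [pow_one] at hxl hyl
  have := Int.eq_zero_of_abs_lt_dvd hd'
    (Int.abs_sub_lt_of_lt_lt (by exact_mod_cast hyl) (by exact_mod_cast hxl))
  omega

lemma aux_dense : Dense {x : ℤ_[p] | ∃ n : ℕ, 0 < n ∧ x = (n : ℤ_[p])} := by
  rw [Metric.dense_iff]
  intro x r hr
  obtain ⟨k, hk⟩ := PadicInt.exists_pow_neg_lt p hr
  refine ⟨((x.appr k + p ^ k : ℕ) : ℤ_[p]), ?_, ⟨x.appr k + p ^ k, ?_, rfl⟩⟩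
  · rw [Metric.mem_ball, dist_eq_norm]
    refine lt_of_le_of_lt ?_ hk
    rw [PadicInt.norm_le_pow_iff_mem_span_pow]
    have h1 := x.appr_spec k
    have h2 : ((p : ℤ_[p]) ^ k) ∈ Ideal.span {(p : ℤ_[p]) ^ k} :=
      Ideal.mem_span_singleton_self _
    have : ((x.appr k + p ^ k : ℕ) : ℤ_[p]) - x = -((x - x.appr k) - (p : ℤ_[p]) ^ k) := by
      push_cast; ring
    rw [this]
    exact neg_mem (Ideal.sub_mem _ h1 h2)
  · have := Fact.out (p := p.Prime)
    have : 0 < p ^ k := Nat.pow_pos this.pos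
    omega

end Aux

/-- Let `p` be a prime, `0 ≤ a ≤ p-1`, and `t ∈ ℤ_p`.  Then the rising factorial satisfies
`(t)_a = (-1)^a · (Γ_p(t+a)/Γ_p(t)) · (t + [-t]₀)^{ν(a, [-t]₀)}` where `ν(a,x) = 1` if `x < a`
and `0` otherwise.  (Stated multiplied out in `ℤ_p`.) -/
theorem stmt17 (p : ℕ) [Fact p.Prime]
    (Gp : ℤ_[p] → ℤ_[p]) (hcont : Continuous Gp)
    (hval : ∀ n : ℕ, 0 < n →
      Gp (n : ℤ_[p]) = (-1) ^ n * ∏ i ∈ (Finset.Ico 1 n).filter (fun i => ¬ p ∣ i), (i : ℤ_[p]))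
    (a : ℕ) (haa : a ≤ p - 1) (t : ℤ_[p]) :
    risingFact t a * Gp t =
      (-1) ^ a * Gp (t + (a : ℤ_[p])) *
        (if (-t).appr 1 < a then t + (((-t).appr 1 : ℕ) : ℤ_[p]) else 1) := by
  have hp : p.Prime := Fact.out
  -- the natural-number case
  have hnat : ∀ n : ℕ, 0 < n →
      risingFact ((n : ℤ_[p])) a * Gp (n : ℤ_[p]) =
        (-1) ^ a * Gp ((n : ℤ_[p]) + (a : ℤ_[p])) *
          (if (-(n : ℤ_[p])).appr 1 < a then (n : ℤ_[p]) + (((-(n : ℤ_[p])).appr 1 : ℕ) : ℤ_[p])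
            else 1) := by
    intro n hn
    set r : ℕ := (-(n : ℤ_[p])).appr 1 with hrdef
    have hrlt : r < p := by
      have := (-(n : ℤ_[p])).appr_lt 1
      rwa [pow_one] at this
    have hrdvd : p ∣ (n + r) := by
      apply aux_nat_dvd_of_dvd_cast
      have h1 := PadicInt.appr_spec 1 (-(n : ℤ_[p]))
      rw [Ideal.mem_span_singleton, pow_one] at h1
      have : ((n + r : ℕ) : ℤ_[p]) = -((-(n : ℤ_[p])) - r) := by push_cast; ring
      rw [this]
      exact dvd_neg.mpr h1
    -- characterize multiples of p in [n, n+a)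
    have hfilter : (Finset.Ico n (n + a)).filter (fun i => p ∣ i)
        = if r < a then {n + r} else ∅ := by
      ext i
      simp only [Finset.mem_filter, Finset.mem_Ico]
      split_ifs with hra
      · simp only [Finset.mem_singleton]
        constructor
        · rintro ⟨⟨h1, h2⟩, h3⟩
          -- i and n+r are both multiples of p in [n, n+p)
          have hmod : i ≡ (n + r) [MOD p] :=
            (Nat.modEq_zero_iff_dvd.mpr h3).trans (Nat.modEq_zero_iff_dvd.mpr hrdvd).symm
          have hmod2 : (i - n) ≡ r [MOD p] := by
            have : (n + (i - n)) ≡ (n + r) [MOD p] := by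
              rwa [Nat.add_sub_cancel' h1]
            exact Nat.ModEq.add_left_cancel' n this
          have : i - n = r := hmod2.eq_of_lt_of_lt (by omega) hrlt
          omega
        · rintro rfl
          exact ⟨⟨Nat.le_add_right _ _, by omega⟩, hrdvd⟩
      · simp only [Finset.notMem_empty, iff_false]
        rintro ⟨⟨h1, h2⟩, h3⟩
        have hmod : i ≡ (n + r) [MOD p] :=
          (Nat.modEq_zero_iff_dvd.mpr h3).trans (Nat.modEq_zero_iff_dvd.mpr hrdvd).symm
        have hmod2 : (i - n) ≡ r [MOD p] := by
          have : (n + (i - n)) ≡ (n + r) [MOD p] := by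
            rwa [Nat.add_sub_cancel' h1]
          exact Nat.ModEq.add_left_cancel' n this
        have : i - n = r := hmod2.eq_of_lt_of_lt (by omega) hrlt
        omega
    -- rewrite the rising factorial as a product over Ico n (n+a)
    have hrf : risingFact ((n : ℤ_[p])) a = ∏ i ∈ Finset.Ico n (n + a), (i : ℤ_[p]) := by
      rw [risingFact, Finset.prod_Ico_eq_prod_range]
      simp only [Nat.add_sub_cancel_left]
      push_cast
      rfl
    -- split that product along divisibility by p
    have hsplit : (∏ i ∈ Finset.Ico n (n + a), (i : ℤ_[p]))
        = (∏ i ∈ (Finset.Ico n (n + a)).filter (fun i => ¬ p ∣ i), (i : ℤ_[p]))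
          * (if r < a then (n : ℤ_[p]) + (r : ℤ_[p]) else 1) := by
      rw [← Finset.prod_filter_mul_prod_filter_not (Finset.Ico n (n + a)) (fun i => ¬ p ∣ i)
        (fun i => (i : ℤ_[p]))]
      congr 1
      have : (Finset.Ico n (n + a)).filter (fun i => ¬ ¬ p ∣ i)
          = (Finset.Ico n (n + a)).filter (fun i => p ∣ i) := by
        apply Finset.filter_congr
        intro i _
        simp
      rw [this, hfilter]
      split_ifs with hra
      · rw [Finset.prod_singleton]; push_cast; ring
      · simp
    -- split the gamma products
    have hsplitG : ((Finset.Ico 1 (n + a)).filter fun i => ¬ p ∣ i)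
        = ((Finset.Ico 1 n).filter fun i => ¬ p ∣ i)
          ∪ ((Finset.Ico n (n + a)).filter fun i => ¬ p ∣ i) := by
      rw [← Finset.filter_union, Finset.Ico_union_Ico_eq_Ico hn (Nat.le_add_right _ _)]
    have hdisj : Disjoint ((Finset.Ico 1 n).filter fun i => ¬ p ∣ i)
        ((Finset.Ico n (n + a)).filter fun i => ¬ p ∣ i) :=
      Finset.disjoint_filter_filter (Finset.Ico_disjoint_Ico_consecutive 1 n (n + a))
    have hGna : Gp ((n : ℤ_[p]) + (a : ℤ_[p]))
        = (-1) ^ (n + a) * ((∏ i ∈ (Finset.Ico 1 n).filter (fun i => ¬ p ∣ i), (i : ℤ_[p]))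
            * ∏ i ∈ (Finset.Ico n (n + a)).filter (fun i => ¬ p ∣ i), (i : ℤ_[p])) := by
      have : ((n : ℤ_[p]) + (a : ℤ_[p])) = ((n + a : ℕ) : ℤ_[p]) := by push_cast; ring
      rw [this, hval (n + a) (by omega), hsplitG, Finset.prod_union hdisj]
    have hsign : ((-1 : ℤ_[p]) ^ a) * ((-1 : ℤ_[p]) ^ (n + a)) = (-1) ^ n := by
      rw [← pow_add]
      have : a + (n + a) = n + 2 * a := by ring
      rw [this, pow_add, pow_mul]
      norm_num
    rw [hrf, hsplit, hval n hn, hGna]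
    rw [show (-1 : ℤ_[p]) ^ a * ((-1 : ℤ_[p]) ^ (n + a)
        * ((∏ i ∈ (Finset.Ico 1 n).filter (fun i => ¬ p ∣ i), (i : ℤ_[p]))
          * ∏ i ∈ (Finset.Ico n (n + a)).filter (fun i => ¬ p ∣ i), (i : ℤ_[p])))
        * (if r < a then (n : ℤ_[p]) + (r : ℤ_[p]) else 1)
        = ((-1 : ℤ_[p]) ^ a * (-1 : ℤ_[p]) ^ (n + a))
          * (((∏ i ∈ (Finset.Ico 1 n).filter (fun i => ¬ p ∣ i), (i : ℤ_[p]))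
          * ∏ i ∈ (Finset.Ico n (n + a)).filter (fun i => ¬ p ∣ i), (i : ℤ_[p]))
            * (if r < a then (n : ℤ_[p]) + (r : ℤ_[p]) else 1)) from by ring, hsign]
    ring
  -- extend to all of ℤ_[p] by continuity and density
  have hF : Continuous (fun t : ℤ_[p] => risingFact t a * Gp t) := by
    apply Continuous.mul _ hcont
    unfold risingFact
    exact continuous_finset_prod _ fun i _ => continuous_id.add continuous_const
  have hH : Continuous (fun t : ℤ_[p] =>
      (if (-t).appr 1 < a then t + (((-t).appr 1 : ℕ) : ℤ_[p]) else 1)) := by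
    rw [continuous_iff_continuousAt]
    intro t₀
    have hball : Metric.ball t₀ 1 ∈ nhds t₀ := Metric.ball_mem_nhds t₀ one_pos
    have hev : (fun t : ℤ_[p] =>
        (if (-t).appr 1 < a then t + (((-t).appr 1 : ℕ) : ℤ_[p]) else 1))
        =ᶠ[nhds t₀] (fun t : ℤ_[p] =>
        (if (-t₀).appr 1 < a then t + (((-t₀).appr 1 : ℕ) : ℤ_[p]) else 1)) := by
      filter_upwards [hball] with t ht
      have : (-t).appr 1 = (-t₀).appr 1 := by
        apply aux_appr1_congr
        rw [← PadicInt.norm_lt_one_iff_dvd]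
        have : -t - -t₀ = -(t - t₀) := by ring
        rw [this, norm_neg, ← dist_eq_norm]
        exact Metric.mem_ball.mp ht
      rw [this]
    apply ContinuousAt.congr_of_eventuallyEq _ hev
    split_ifs
    · exact (continuous_id.add continuous_const).continuousAt
    · exact continuousAt_const
  have hG : Continuous (fun t : ℤ_[p] =>
      (-1 : ℤ_[p]) ^ a * Gp (t + (a : ℤ_[p])) *
        (if (-t).appr 1 < a then t + (((-t).appr 1 : ℕ) : ℤ_[p]) else 1)) :=
    (continuous_const.mul (hcont.comp (continuous_id.add continuous_const))).mul hH
  have := Continuous.ext_on aux_dense hF hG ?_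
  · exact congrFun this t
  · rintro x ⟨n, hn, rfl⟩
    exact hnat n hn
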